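/- Let X be a strongly zero-dimensional topological space and Y a metrizable space. Then K₁(X,Y) ∩ Σ^f(X,Y) = B₁(X,Y); that is, a map f : X → Y is a pointwise limit of continuous maps if and only if the preimage of every open set is a functionally F_σ-set and f has a σ-strongly-functionally-discrete base. -/

import Mathlib

open Set Filter Topology Metric

def IsZeroSet {X : Type*} [TopologicalSpace X] (A : Set X) : Prop :=
  ∃ f : X → ℝ, Continuous f ∧ A = f ⁻¹' {0}

def IsCozeroSet {X : Type*} [TopologicalSpace X] (A : Set X) : Prop := IsZeroSet Aᶜ

def IsDiscreteFamily {X : Type*} [TopologicalSpace X] {ι : Type*} (U : ι → Set X) : Prop :=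
  ∀ x : X, ∃ V ∈ 𝓝 x, {i | (U i ∩ V).Nonempty}.Subsingleton

def IsSFDFamily {X : Type*} [TopologicalSpace X] {ι : Type*} (A : ι → Set X) : Prop :=
  ∃ U : ι → Set X, IsDiscreteFamily U ∧ (∀ i, IsCozeroSet (U i)) ∧ ∀ i, closure (A i) ⊆ U i

def IsSFDSetFamily {X : Type*} [TopologicalSpace X] (𝓐 : Set (Set X)) : Prop :=
  IsSFDFamily (fun A : 𝓐 => (A : Set X))

def IsBaseFor {X Y : Type*} [TopologicalSpace X] [TopologicalSpace Y]
    (𝓑 : Set (Set X)) (f : X → Y) : Prop :=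
  ∀ V : Set Y, IsOpen V → ∃ 𝓢 ⊆ 𝓑, f ⁻¹' V = ⋃₀ 𝓢

def FunctionallyFSigma {X : Type*} [TopologicalSpace X] (A : Set X) : Prop :=
  ∃ F : ℕ → Set X, (∀ n, IsZeroSet (F n)) ∧ A = ⋃ n, F n

def MemK1 {X Y : Type*} [TopologicalSpace X] [TopologicalSpace Y] (f : X → Y) : Prop :=
  ∀ V : Set Y, IsOpen V → FunctionallyFSigma (f ⁻¹' V)

def MemB1 {X Y : Type*} [TopologicalSpace X] [TopologicalSpace Y] (f : X → Y) : Prop :=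
  ∃ g : ℕ → X → Y, (∀ n, Continuous (g n)) ∧
    ∀ x, Tendsto (fun n => g n x) atTop (𝓝 (f x))

def MemSigmaF {X Y : Type*} [TopologicalSpace X] [TopologicalSpace Y] (f : X → Y) : Prop :=
  ∃ 𝓑 : ℕ → Set (Set X), (∀ n, IsSFDSetFamily (𝓑 n)) ∧ IsBaseFor (⋃ n, 𝓑 n) f

def MemSigmaF0 {X Y : Type*} [TopologicalSpace X] [TopologicalSpace Y] (f : X → Y) : Prop :=
  ∃ 𝓑 : ℕ → Set (Set X), (∀ n, IsSFDSetFamily (𝓑 n)) ∧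
    (∀ n, ∀ A ∈ 𝓑 n, IsZeroSet A) ∧ IsBaseFor (⋃ n, 𝓑 n) f

def CompletelySeparatedSets {X : Type*} [TopologicalSpace X] (A B : Set X) : Prop :=
  ∃ h : X → ℝ, Continuous h ∧ (∀ x, h x ∈ Icc (0:ℝ) 1) ∧
    (∀ x ∈ A, h x = 0) ∧ ∀ x ∈ B, h x = 1

def StronglyZeroDimensional (X : Type*) [TopologicalSpace X] : Prop :=
  ∀ A B : Set X, CompletelySeparatedSets A B → ∃ U : Set X, IsClopen U ∧ A ⊆ U ∧ U ⊆ Bᶜ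

def IsCSet {X : Type*} [TopologicalSpace X] (A : Set X) : Prop :=
  ∃ U : ℕ → Set X, (∀ n, IsClopen (U n)) ∧ A = ⋂ n, U n

def IsCSigmaSet {X : Type*} [TopologicalSpace X] (A : Set X) : Prop :=
  ∃ C : ℕ → Set X, (∀ n, IsCSet (C n)) ∧ A = ⋃ n, C n

def AlmostStronglyZeroDimensional (X : Type*) [TopologicalSpace X] : Prop :=
  ∀ A : Set X, IsZeroSet A → IsCSigmaSet A

def CountablyCompactIn {X : Type*} [TopologicalSpace X] (F : Set X) : Prop :=
  ∀ U : ℕ → Set X, (∀ n, IsOpen (U n)) → F ⊆ ⋃ n, U n →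
    ∃ s : Finset ℕ, F ⊆ ⋃ n ∈ s, U n


section Util
variable {X : Type*} [TopologicalSpace X]

lemma isZeroSet_univ : IsZeroSet (univ : Set X) :=
  ⟨fun _ => 0, continuous_const, by ext x; simp⟩

lemma isZeroSet_empty : IsZeroSet (∅ : Set X) :=
  ⟨fun _ => 1, continuous_const, by ext x; simp⟩

lemma IsZeroSet.preimage {Z : Type*} [TopologicalSpace Z] {A : Set Z} (hA : IsZeroSet A)
    {g : X → Z} (hg : Continuous g) : IsZeroSet (g ⁻¹' A) := by
  obtain ⟨φ, hφ, rfl⟩ := hA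
  exact ⟨φ ∘ g, hφ.comp hg, rfl⟩

lemma IsZeroSet.isClosed {A : Set X} (h : IsZeroSet A) : IsClosed A := by
  obtain ⟨φ, hφ, rfl⟩ := h; exact isClosed_singleton.preimage hφ

lemma isZeroSet_level {φ : X → ℝ} (hφ : Continuous φ) (c : ℝ) :
    IsZeroSet {x | c ≤ |φ x|} := by
  refine ⟨fun x => max (c - |φ x|) 0, by fun_prop, ?_⟩
  ext x
  simp only [mem_setOf_eq, mem_preimage, mem_singleton_iff, max_eq_right_iff, sub_nonpos]

lemma isZeroSet_iInter {Z : ℕ → Set X} (h : ∀ n, IsZeroSet (Z n)) :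
    IsZeroSet (⋂ n, Z n) := by
  choose φ hφc hφ using h
  set ψ : ℕ → X → ℝ := fun n x => (2⁻¹ : ℝ) ^ n * min |φ n x| 1 with hψdef
  have hnn : ∀ n x, 0 ≤ ψ n x := by
    intro n x
    exact mul_nonneg (by positivity) (le_min (abs_nonneg _) one_pos.le)
  have hb : ∀ n x, ‖ψ n x‖ ≤ (2⁻¹ : ℝ) ^ n := by
    intro n x
    rw [Real.norm_of_nonneg (hnn n x)]
    have h1 : min |φ n x| 1 ≤ 1 := min_le_right _ _
    calc ψ n x ≤ (2⁻¹:ℝ)^n * 1 := by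
          exact mul_le_mul_of_nonneg_left h1 (by positivity)
      _ = _ := mul_one _
  have hsum : Summable (fun n => (2⁻¹ : ℝ) ^ n) :=
    summable_geometric_of_lt_one (by norm_num) (by norm_num)
  have hcont : ∀ n, Continuous (ψ n) := fun n => by
    have := hφc n; fun_prop
  have hsx : ∀ x, Summable fun n => ψ n x := by
    intro x
    refine Summable.of_nonneg_of_le (fun n => hnn n x) (fun n => ?_) hsum
    have := hb n x; rwa [Real.norm_of_nonneg (hnn n x)] at this
  refine ⟨fun x => ∑' n, ψ n x, continuous_tsum hcont hsum hb, ?_⟩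
  ext x
  simp only [mem_iInter, mem_preimage, mem_singleton_iff]
  have hmem : ∀ n, x ∈ Z n ↔ φ n x = 0 := by
    intro n; rw [hφ n]; simp
  constructor
  · intro hx
    have : ∀ n, ψ n x = 0 := by
      intro n
      have := (hmem n).1 (hx n)
      simp [hψdef, this]
    simp [this]
  · intro hx n
    rw [hmem]
    by_contra hne
    have hpos : 0 < ψ n x := by
      have : (0:ℝ) < min |φ n x| 1 := lt_min (abs_pos.mpr hne) one_pos
      positivity
    have hle : ψ n x ≤ ∑' n, ψ n x := Summable.le_tsum (hsx x) n (fun j _ => hnn j x)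
    rw [hx] at hle
    linarith

lemma isZeroSet_inter {A B : Set X} (hA : IsZeroSet A) (hB : IsZeroSet B) :
    IsZeroSet (A ∩ B) := by
  obtain ⟨a, hac, rfl⟩ := hA; obtain ⟨b, hbc, rfl⟩ := hB
  refine ⟨fun x => |a x| + |b x|, by fun_prop, ?_⟩
  ext x
  simp only [mem_inter_iff, mem_preimage, mem_singleton_iff]
  constructor
  · rintro ⟨h1, h2⟩; simp [h1, h2]
  · intro h
    have ha := abs_nonneg (a x); have hb := abs_nonneg (b x)
    constructor <;> [skip; skip] <;>
      · rw [← abs_eq_zero]; linarith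

lemma clopen_between (hX : StronglyZeroDimensional X) {φ : X → ℝ} (hφ : Continuous φ)
    {a b : ℝ} (hab : a < b) :
    ∃ W : Set X, IsClopen W ∧ {x | φ x ≤ a} ⊆ W ∧ W ⊆ {x | φ x < b} := by
  have hcs : CompletelySeparatedSets {x | φ x ≤ a} {x | b ≤ φ x} := by
    refine ⟨fun x => max 0 (min ((φ x - a) / (b - a)) 1), by fun_prop, ?_, ?_, ?_⟩
    · intro x
      constructor
      · exact le_max_left _ _
      · exact max_le zero_le_one (min_le_right _ _)
    · intro x hx
      simp only [mem_setOf_eq] at hx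
      have : (φ x - a) / (b - a) ≤ 0 := div_nonpos_of_nonpos_of_nonneg (by linarith) (by linarith)
      dsimp only
      rw [max_eq_left]
      exact le_trans (min_le_left _ _) this
    · intro x hx
      simp only [mem_setOf_eq] at hx
      have : (1:ℝ) ≤ (φ x - a) / (b - a) := (le_div_iff₀ (by linarith)).2 (by linarith)
      dsimp only
      rw [min_eq_right this, max_eq_right zero_le_one]
  obtain ⟨U, hU, h1, h2⟩ := hX _ _ hcs
  refine ⟨U, hU, h1, fun x hx => ?_⟩
  have := h2 hx
  simp only [mem_compl_iff, mem_setOf_eq, not_le] at this ⊢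
  exact this

lemma clopen_sep_zero (hX : StronglyZeroDimensional X) {Z₁ Z₂ : Set X}
    (h₁ : IsZeroSet Z₁) (h₂ : IsZeroSet Z₂) (hd : Z₁ ∩ Z₂ = ∅) :
    ∃ W : Set X, IsClopen W ∧ Z₁ ⊆ W ∧ W ∩ Z₂ = ∅ := by
  obtain ⟨a, hac, rfl⟩ := h₁; obtain ⟨b, hbc, rfl⟩ := h₂
  have hpos : ∀ x, 0 < |a x| + |b x| := by
    intro x
    rcases (abs_nonneg (a x)).lt_or_eq with h | h
    · positivity
    · rcases (abs_nonneg (b x)).lt_or_eq with h' | h'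
      · positivity
      · exfalso
        have hx : x ∈ a ⁻¹' {0} ∩ b ⁻¹' {0} := by
          constructor <;> simp [← abs_eq_zero, h.symm, h'.symm]
        rw [hd] at hx; exact hx
  have hcs : CompletelySeparatedSets (a ⁻¹' {0}) (b ⁻¹' {0}) := by
    refine ⟨fun x => |a x| / (|a x| + |b x|), ?_, ?_, ?_, ?_⟩
    · exact (hac.abs).div (by fun_prop) (fun x => (hpos x).ne')
    · intro x
      constructor
      · positivity
      · rw [div_le_one (hpos x)]
        have := abs_nonneg (b x); linarith
    · intro x hx
      simp only [mem_preimage, mem_singleton_iff] at hx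
      simp [hx]
    · intro x hx
      simp only [mem_preimage, mem_singleton_iff] at hx
      have hb0 : |b x| = 0 := by simp [hx]
      dsimp only
      rw [hb0, add_zero, div_self]
      have := hpos x; rw [hb0, add_zero] at this; exact this.ne'
  obtain ⟨U, hU, hs1, hs2⟩ := hX _ _ hcs
  refine ⟨U, hU, hs1, ?_⟩
  rw [eq_empty_iff_forall_notMem]
  rintro x ⟨hxU, hxZ⟩
  exact hs2 hxU hxZ
end Util


section Kset
variable {Y : Type*} [MetricSpace Y]

/-- the `c`-core of `V` -/
def Kset (c : ℝ) (V : Set Y) : Set Y := {y | ∀ z ∈ Vᶜ, c ≤ dist y z}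

lemma Kset_subset {c : ℝ} (hc : 0 < c) (V : Set Y) : Kset c V ⊆ V := by
  intro y hy
  by_contra h
  have := hy y h
  simp at this; linarith

lemma isZeroSet_Kset {c : ℝ} (hc : 0 < c) (V : Set Y) : IsZeroSet (Kset c V) := by
  rcases eq_empty_or_nonempty Vᶜ with h | h
  · have : Kset c V = univ := by
      ext y; simp [Kset, h]
    rw [this]
    exact ⟨fun _ => 0, continuous_const, by ext y; simp⟩
  · have heq : Kset c V = (fun y => max (c - infDist y Vᶜ) 0) ⁻¹' {0} := by
      ext y
      simp only [Kset, mem_setOf_eq, mem_preimage, mem_singleton_iff, max_eq_right_iff,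
        sub_nonpos]
      constructor
      · intro hy
        by_contra hlt
        push_neg at hlt
        obtain ⟨z, hz, hdz⟩ := (infDist_lt_iff h).1 hlt
        exact absurd (hy z hz) (by linarith)
      · intro hy z hz
        exact le_trans hy (infDist_le_dist_of_mem hz)
    rw [heq]
    exact ⟨_, ((continuous_const.sub (continuous_infDist_pt _)).max continuous_const), rfl⟩

lemma Kset_isClosed {c : ℝ} (hc : 0 < c) (V : Set Y) : IsClosed (Kset c V) :=
  (isZeroSet_Kset hc V).isClosed

lemma mem_Kset_of_ball {c : ℝ} {V : Set Y} {y : Y} (h : ball y (2*c) ⊆ V) :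
    ∀ z : Y, dist z y < c → z ∈ Kset c V := by
  intro z hz w hw
  by_contra hlt
  push_neg at hlt
  have : w ∈ ball y (2*c) := by
    rw [mem_ball]
    calc dist w y ≤ dist w z + dist z y := dist_triangle _ _ _
      _ < c + c := by rw [dist_comm w z]; linarith
      _ = 2*c := by ring
  exact hw (h this)
end Kset

lemma memK1_of_memB1 {X Y : Type*} [TopologicalSpace X] [MetricSpace Y] {f : X → Y}
    (hf : MemB1 f) : MemK1 f := by
  obtain ⟨g, hgc, hgl⟩ := hf
  intro V hV
  -- building blocks
  set Z : ℕ × ℕ → Set X := fun jN =>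
    ⋂ q, g (jN.2 + q) ⁻¹' (Kset (1/(jN.1+1)) V) with hZ
  have hpos : ∀ j : ℕ, (0:ℝ) < 1/(j+1) := by
    intro j; positivity
  have hzero : ∀ jN : ℕ × ℕ, IsZeroSet (Z jN) := by
    intro jN
    exact isZeroSet_iInter fun q =>
      (isZeroSet_Kset (hpos jN.1) V).preimage (hgc _)
  have hequ : f ⁻¹' V = ⋃ jN : ℕ × ℕ, Z jN := by
    ext x
    simp only [mem_preimage, mem_iUnion]
    constructor
    · intro hx
      obtain ⟨r, hr, hball⟩ := Metric.isOpen_iff.1 hV (f x) hx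
      obtain ⟨j, hj⟩ := exists_nat_one_div_lt (show (0:ℝ) < r/2 by linarith)
      have h2c : ball (f x) (2*(1/(j+1))) ⊆ V := by
        refine Subset.trans ?_ hball
        intro z hz
        rw [mem_ball] at hz ⊢
        have : (1:ℝ)/(j+1) < r/2 := hj
        calc dist z (f x) < 2*(1/(j+1)) := hz
          _ < 2*(r/2) := by linarith
          _ = r := by ring
      have hconv := Metric.tendsto_atTop.1 (hgl x) (1/(2*(j+1))) (by positivity)
      obtain ⟨N, hN⟩ := hconv
      refine ⟨⟨2*j+1, N⟩, ?_⟩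
      rw [hZ]
      simp only [mem_iInter, mem_preimage]
      intro q
      -- dist (g (N+q) x) (f x) < 1/(2(j+1)) and need g (N+q) x ∈ Kset (1/(2j+2)) V
      have hd := hN (N+q) (Nat.le_add_right _ _)
      have hcc : (1:ℝ)/((2*j+1:ℕ)+1) = 1/(2*(j+1)) := by push_cast; ring_nf
      rw [hcc]
      -- show membership: ∀ z ∉ V, 1/(2(j+1)) ≤ dist (g (N+q) x) z
      intro z hz
      have h1 : (2:ℝ)*(1/(2*(j+1))) ≤ dist (f x) z := by
        by_contra hlt
        push_neg at hlt
        apply hz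
        apply h2c
        rw [mem_ball, dist_comm]
        calc dist (f x) z < 2*(1/(2*(j+1))) := hlt
          _ = 1/(j+1) := by field_simp
          _ ≤ 2*(1/(j+1)) := by have := hpos j; linarith
      have h2 : dist (f x) z ≤ dist (f x) (g (N+q) x) + dist (g (N+q) x) z :=
        dist_triangle _ _ _
      rw [dist_comm (f x) (g (N+q) x)] at h2
      linarith
    · rintro ⟨⟨j, N⟩, hx⟩
      rw [hZ] at hx
      simp only [mem_iInter, mem_preimage] at hx
      have hK : f x ∈ Kset (1/(j+1)) V := by
        have hcl := Kset_isClosed (Y := Y) (hpos j) V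
        refine hcl.mem_of_tendsto ((hgl x).comp (tendsto_add_atTop_nat N)) ?_
        refine Eventually.of_forall fun q => ?_
        have := hx q
        simpa [Nat.add_comm] using this
      exact Kset_subset (hpos j) V hK
  obtain ⟨e⟩ : Nonempty (ℕ ≃ ℕ × ℕ) := ⟨(Denumerable.eqv (ℕ × ℕ)).symm⟩
  refine ⟨fun n => Z (e n), fun n => hzero _, ?_⟩
  rw [hequ, ← e.surjective.iUnion_comp (g := Z)]


section Metr
variable {Y : Type*} [MetricSpace Y]

lemma isCozeroSet_of_isOpen {V : Set Y} (hV : IsOpen V) : IsCozeroSet V := by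
  rcases eq_empty_or_nonempty Vᶜ with h | h
  · rw [IsCozeroSet, h]; exact isZeroSet_empty
  · refine ⟨fun y => infDist y Vᶜ, continuous_infDist_pt _, ?_⟩
    ext y
    simp only [mem_preimage, mem_singleton_iff]
    exact (hV.isClosed_compl.mem_iff_infDist_zero h)

noncomputable def delta (m : ℕ) : ℝ := (2:ℝ)⁻¹ ^ m

lemma delta_pos (m : ℕ) : 0 < delta m := by unfold delta; positivity

variable (Y)

noncomputable def least (c : Y) (m : ℕ) : Y :=
  (IsWellFounded.wf (r := (WellOrderingRel : Y → Y → Prop))).min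
    {s | c ∈ ball s (delta m)} ⟨c, mem_ball_self (delta_pos m)⟩

lemma least_mem (c : Y) (m : ℕ) : c ∈ ball (least Y c m) (delta m) :=
  (IsWellFounded.wf (r := (WellOrderingRel : Y → Y → Prop))).min_mem
    {s | c ∈ ball s (delta m)} ⟨c, mem_ball_self (delta_pos m)⟩

lemma least_not_lt {c s : Y} {m : ℕ} (h : c ∈ ball s (delta m)) :
    ¬ WellOrderingRel s (least Y c m) :=
  (IsWellFounded.wf (r := (WellOrderingRel : Y → Y → Prop))).not_lt_min
    {s | c ∈ ball s (delta m)} h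

/-- centers for the Stone refinement -/
def stoneC (m n : ℕ) (s : Y) : Set Y :=
  {c | least Y c m = s ∧ ball c (3 * delta n) ⊆ ball s (delta m)}

def stoneV (m n : ℕ) (s : Y) : Set Y :=
  ⋃ c ∈ stoneC Y m n s, ball c (delta n)

lemma stoneV_isOpen (m n : ℕ) (s : Y) : IsOpen (stoneV Y m n s) :=
  isOpen_biUnion fun _ _ => isOpen_ball

lemma stoneV_subset (m n : ℕ) (s : Y) : stoneV Y m n s ⊆ ball s (delta m) := by
  rintro y hy
  simp only [stoneV, mem_iUnion] at hy
  obtain ⟨c, ⟨_, hsub⟩, hball⟩ := hy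
  apply hsub
  rw [mem_ball] at hball ⊢
  have := delta_pos n
  linarith

lemma stoneV_discrete (m n : ℕ) : IsDiscreteFamily (fun s : Y => stoneV Y m n s) := by
  intro z
  refine ⟨ball z (delta n / 2), ball_mem_nhds _ (by have := delta_pos n; linarith), ?_⟩
  rintro s ⟨p, hp1, hp2⟩ t ⟨q, hq1, hq2⟩
  simp only [stoneV, mem_iUnion] at hp1 hq1
  obtain ⟨c, hc, hpc⟩ := hp1
  obtain ⟨c', hc', hqc⟩ := hq1
  rw [mem_ball] at hpc hqc
  rw [mem_ball] at hp2 hq2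
  have hcc' : dist c c' < 3 * delta n := by
    have t1 := dist_triangle c p c'
    have t2 := dist_triangle p z c'
    have t3 := dist_triangle z q c'
    have e1 : dist c p = dist p c := dist_comm c p
    have e2 : dist z q = dist q z := dist_comm z q
    have e3 : dist q c' = dist q c' := rfl
    have hd : dist c c' ≤ dist p c + dist p z + dist q z + dist q c' := by linarith
    have := delta_pos n
    linarith
  -- c' ∈ ball s (delta m) hence ¬ s < t ; and c ∈ ball t (delta m) hence ¬ t < s
  have h1 : c' ∈ ball s (delta m) := hc.2 (by rw [mem_ball]; rw [dist_comm] at hcc'; exact hcc')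
  have h2 : c ∈ ball t (delta m) := hc'.2 (by rw [mem_ball]; exact hcc')
  have hn1 : ¬ WellOrderingRel s t := by
    have := least_not_lt Y h1
    rwa [hc'.1] at this
  have hn2 : ¬ WellOrderingRel t s := by
    have := least_not_lt Y h2
    rwa [hc.1] at this
  rcases trichotomous_of (WellOrderingRel : Y → Y → Prop) s t with h | h | h
  · exact absurd h hn1
  · exact h
  · exact absurd h hn2

lemma stoneV_cover (m : ℕ) (y : Y) : ∃ n s, y ∈ stoneV Y m n s := by
  set s := least Y y m with hs
  have hmem : y ∈ ball s (delta m) := least_mem Y y m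
  obtain ⟨r, hr, hball⟩ := Metric.isOpen_iff.1 isOpen_ball y hmem
  obtain ⟨n, hn⟩ : ∃ n : ℕ, 3 * delta n < r := by
    obtain ⟨n, hn⟩ := exists_pow_lt_of_lt_one (show (0:ℝ) < r/3 by linarith)
      (show (2:ℝ)⁻¹ < 1 by norm_num)
    exact ⟨n, by unfold delta; linarith⟩
  refine ⟨n, s, ?_⟩
  simp only [stoneV, mem_iUnion]
  refine ⟨y, ⟨hs.symm, ?_⟩, mem_ball_self (delta_pos n)⟩
  refine Subset.trans ?_ hball
  intro w hw
  rw [mem_ball] at hw ⊢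
  linarith
end Metr

section Assemble
variable {X Y : Type*} [TopologicalSpace X] [MetricSpace Y]

lemma IsDiscreteFamily.preimage {ι : Type*} {U : ι → Set Y} (h : IsDiscreteFamily U)
    {g : X → Y} (hg : Continuous g) : IsDiscreteFamily (fun i => g ⁻¹' U i) := by
  intro x
  obtain ⟨V, hV, hsub⟩ := h (g x)
  refine ⟨g ⁻¹' V, hg.continuousAt.preimage_mem_nhds hV, ?_⟩
  intro i hi j hj
  refine hsub ?_ ?_
  · obtain ⟨w, hw1, hw2⟩ := hi; exact ⟨g w, hw1, hw2⟩
  · obtain ⟨w, hw1, hw2⟩ := hj; exact ⟨g w, hw1, hw2⟩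

lemma IsDiscreteFamily.comp_inj {Z : Type*} [TopologicalSpace Z] {ι κ : Type*} {U : ι → Set Z}
    (h : IsDiscreteFamily U) {e : κ → ι} (he : Function.Injective e) :
    IsDiscreteFamily (fun k => U (e k)) := by
  intro x
  obtain ⟨V, hV, hsub⟩ := h x
  exact ⟨V, hV, fun i hi j hj => he (hsub hi hj)⟩

lemma IsCozeroSet.preimage {A : Set Y} (hA : IsCozeroSet A) {g : X → Y} (hg : Continuous g) :
    IsCozeroSet (g ⁻¹' A) := by
  have := IsZeroSet.preimage hA hg
  rwa [preimage_compl] at this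

lemma memSigmaF_of_memB1 {f : X → Y} (hf : MemB1 f) : MemSigmaF f := by
  classical
  obtain ⟨g, hgc, hgl⟩ := hf
  have hcpos : ∀ j : ℕ, (0:ℝ) < 1/(j+1) := fun j => by positivity
  set A : ℕ × ℕ × ℕ × ℕ → Y → Set X := fun w s =>
    ⋂ q, g (w.2.2.2 + q) ⁻¹' (Kset (1/(w.2.2.1+1)) (stoneV Y w.1 w.2.1 s)) with hA
  have hAclosed : ∀ w s, IsClosed (A w s) := by
    intro w s
    exact isClosed_iInter fun q => (Kset_isClosed (hcpos w.2.2.1) _).preimage (hgc _)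
  have hAsubK : ∀ w s, A w s ⊆ g w.2.2.2 ⁻¹' (Kset (1/(w.2.2.1+1)) (stoneV Y w.1 w.2.1 s)) := by
    intro w s x hx
    have := mem_iInter.1 hx 0
    simpa using this
  have hAsubV : ∀ w s, A w s ⊆ g w.2.2.2 ⁻¹' (stoneV Y w.1 w.2.1 s) := by
    intro w s x hx
    have h1 : g w.2.2.2 x ∈ Kset (1/(w.2.2.1+1)) (stoneV Y w.1 w.2.1 s) := hAsubK w s hx
    show g w.2.2.2 x ∈ stoneV Y w.1 w.2.1 s
    exact Kset_subset (hcpos w.2.2.1) _ h1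
  have hAsubf : ∀ w s, A w s ⊆ f ⁻¹' (stoneV Y w.1 w.2.1 s) := by
    intro w s x hx
    simp only [hA, mem_iInter, mem_preimage] at hx
    have hK : f x ∈ Kset (1/(w.2.2.1+1)) (stoneV Y w.1 w.2.1 s) := by
      refine (Kset_isClosed (hcpos w.2.2.1) _).mem_of_tendsto
        ((hgl x).comp (tendsto_add_atTop_nat w.2.2.2)) ?_
      refine Eventually.of_forall fun q => ?_
      have := hx q
      simpa [Nat.add_comm] using this
    show f x ∈ stoneV Y w.1 w.2.1 s
    exact Kset_subset (hcpos w.2.2.1) _ hK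
  set Bf : ℕ × ℕ × ℕ × ℕ → Set (Set X) := fun w => range (A w) with hBf
  have hsfd : ∀ w, IsSFDSetFamily (Bf w) := by
    intro w
    set sc : ↥(Bf w) → Y := fun B => B.2.choose with hsc
    have hscspec : ∀ B : ↥(Bf w), A w (sc B) = (B : Set X) := fun B => B.2.choose_spec
    have hscinj : Function.Injective sc := by
      intro B B' h
      apply Subtype.ext
      rw [← hscspec B, ← hscspec B', h]
    refine ⟨fun B => g w.2.2.2 ⁻¹' (stoneV Y w.1 w.2.1 (sc B)), ?_, ?_, ?_⟩
    · exact ((stoneV_discrete Y w.1 w.2.1).preimage (hgc w.2.2.2)).comp_inj hscinj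
    · intro B
      exact (isCozeroSet_of_isOpen (stoneV_isOpen Y w.1 w.2.1 (sc B))).preimage (hgc w.2.2.2)
    · intro B
      show closure (B : Set X) ⊆ g w.2.2.2 ⁻¹' stoneV Y w.1 w.2.1 (sc B)
      rw [← hscspec B, (hAclosed w (sc B)).closure_eq]
      exact hAsubV w (sc B)
  have hbase : IsBaseFor (⋃ w, Bf w) f := by
    intro W hW
    refine ⟨{B | B ∈ ⋃ w, Bf w ∧ B ⊆ f ⁻¹' W}, fun B hB => hB.1, ?_⟩
    apply Subset.antisymm
    · intro x hx
      simp only [mem_preimage] at hx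
      -- pick scale m
      obtain ⟨r, hr, hball⟩ := Metric.isOpen_iff.1 hW (f x) hx
      obtain ⟨m, hm⟩ : ∃ m : ℕ, 2 * delta m < r := by
        obtain ⟨m, hm⟩ := exists_pow_lt_of_lt_one (show (0:ℝ) < r/2 by linarith)
          (show (2:ℝ)⁻¹ < 1 by norm_num)
        exact ⟨m, by unfold delta; linarith⟩
      obtain ⟨n, s, hVs⟩ := stoneV_cover Y m (f x)
      have hV0W : stoneV Y m n s ⊆ W := by
        intro z hz
        apply hball
        rw [mem_ball]
        have h1 := stoneV_subset Y m n s hz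
        have h2 := stoneV_subset Y m n s hVs
        rw [mem_ball] at h1 h2
        calc dist z (f x) ≤ dist z s + dist s (f x) := dist_triangle _ _ _
          _ < delta m + delta m := by rw [dist_comm s (f x)]; linarith
          _ < r := by linarith
      obtain ⟨ρ, hρ, hρball⟩ := Metric.isOpen_iff.1 (stoneV_isOpen Y m n s) (f x) hVs
      obtain ⟨j, hj⟩ := exists_nat_one_div_lt (show (0:ℝ) < ρ/2 by linarith)
      have h2c : ball (f x) (2 * (1/(j+1))) ⊆ stoneV Y m n s := by
        refine Subset.trans ?_ hρball
        intro z hz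
        rw [mem_ball] at hz ⊢
        have : (1:ℝ)/(j+1) < ρ/2 := hj
        linarith
      obtain ⟨N, hN⟩ := Metric.tendsto_atTop.1 (hgl x) (1/(j+1)) (hcpos j)
      set w : ℕ × ℕ × ℕ × ℕ := (m, n, j, N) with hw
      refine ⟨A w s, ⟨mem_iUnion.2 ⟨w, mem_range_self s⟩, ?_⟩, ?_⟩
      · exact Subset.trans (hAsubf w s) (preimage_mono hV0W)
      · simp only [hA, mem_iInter, mem_preimage]
        intro q
        exact mem_Kset_of_ball h2c _ (hN (N+q) (Nat.le_add_right _ _))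
    · rintro x ⟨B, hB, hxB⟩
      exact hB.2 hxB
  obtain ⟨e⟩ : Nonempty (ℕ ≃ ℕ × ℕ × ℕ × ℕ) := ⟨(Denumerable.eqv _).symm⟩
  refine ⟨fun n => Bf (e n), fun n => hsfd _, ?_⟩
  have : ⋃ n, Bf (e n) = ⋃ w, Bf w := e.surjective.iUnion_comp (g := Bf)
  rw [this]
  exact hbase
end Assemble


lemma geom_partial_le (j : ℕ) : ∑ i ∈ Finset.range j, (2:ℝ)⁻¹ ^ i ≤ 2 := by
  have h := geom_sum_eq (show (2:ℝ)⁻¹ ≠ 1 by norm_num) j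
  rw [h]
  have h2 : (0:ℝ) ≤ (2:ℝ)⁻¹ ^ j := by positivity
  have h3 : ((2:ℝ)⁻¹ - 1) = -(2⁻¹) := by norm_num
  rw [h3, div_le_iff_of_neg (by norm_num : (-(2⁻¹:ℝ)) < 0)]
  linarith

lemma memB1_of_unif {X Y : Type*} [TopologicalSpace X] [MetricSpace Y]
    (hX : StronglyZeroDimensional X) {f : X → Y} (F : ℕ → X → Y)
    (hF : ∀ m, MemB1 (F m)) (hclose : ∀ m x, dist (F m x) (f x) ≤ (2:ℝ)⁻¹ ^ m) :
    MemB1 f := by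
  classical
  choose g hgc hgl using hF
  set a : ℕ → ℝ := fun i => (2:ℝ)⁻¹ ^ i with ha
  have hapos : ∀ i, 0 < a i := fun i => by rw [ha]; positivity
  have hFF : ∀ i x, dist (F i x) (F (i+1) x) ≤ 2 * a i := by
    intro i x
    have h1 := hclose i x
    have h2 := hclose (i+1) x
    have h3 : a (i+1) ≤ a i := by
      rw [ha]
      exact pow_le_pow_of_le_one (by norm_num) (by norm_num) (Nat.le_succ i)
    calc dist (F i x) (F (i+1) x) ≤ dist (F i x) (f x) + dist (F (i+1) x) (f x) :=
          dist_triangle_right _ _ _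
      _ ≤ a i + a (i+1) := add_le_add h1 h2
      _ ≤ 2 * a i := by linarith
  have hT : ∀ i k, ∃ T : Set X, IsClopen T ∧
      {x | dist (g i k x) (g (i+1) k x) ≤ 3 * a i} ⊆ T ∧
      T ⊆ {x | dist (g i k x) (g (i+1) k x) < 6 * a i} := by
    intro i k
    exact clopen_between hX (((hgc i k).dist (hgc (i+1) k))) (by nlinarith [hapos i])
  choose T hTclopen hT1 hT2 using hT
  set mk : ℕ → X → ℕ := fun k x =>
    Nat.findGreatest (fun m => x ∈ ⋂ i ∈ Finset.range m, T i k) k with hmk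
  set h : ℕ → X → Y := fun k x => g (mk k x) k x with hh
  have hcongr : ∀ k (x x' : X),
      (∀ i ∈ Finset.range k, (x' ∈ T i k ↔ x ∈ T i k)) → mk k x' = mk k x := by
    intro k x x' hagree
    have hagree' : ∀ m ≤ k,
        ((x' ∈ ⋂ i ∈ Finset.range m, T i k) ↔ (x ∈ ⋂ i ∈ Finset.range m, T i k)) := by
      intro m hm
      simp only [mem_iInter]
      constructor <;> intro hmem i hi
      · exact (hagree i (Finset.mem_range.2 (lt_of_lt_of_le (Finset.mem_range.1 hi) hm))).1
          (hmem i hi)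
      · exact (hagree i (Finset.mem_range.2 (lt_of_lt_of_le (Finset.mem_range.1 hi) hm))).2
          (hmem i hi)
    simp only [hmk]
    rw [Nat.findGreatest_eq_iff]
    have hle : Nat.findGreatest (fun m => x ∈ ⋂ i ∈ Finset.range m, T i k) k ≤ k :=
      Nat.findGreatest_le k
    refine ⟨hle, ?_, ?_⟩
    · intro _
      refine (hagree' _ hle).2 ?_
      exact Nat.findGreatest_spec
        (P := fun m => x ∈ ⋂ i ∈ Finset.range m, T i k) (Nat.zero_le _) (by simp)
    · intro n hlt hnk hP
      exact (Nat.findGreatest_is_greatest hlt hnk) ((hagree' n hnk).1 hP)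
  refine ⟨h, ?_, ?_⟩
  · intro k
    rw [continuous_iff_continuousAt]
    intro x
    set N : Set X := ⋂ i ∈ Finset.range k, (if x ∈ T i k then T i k else (T i k)ᶜ) with hN
    have hNopen : IsOpen N := by
      refine isOpen_biInter_finset fun i _ => ?_
      split
      · exact (hTclopen i k).2
      · exact (hTclopen i k).compl.2
    have hxN : x ∈ N := by
      rw [hN]
      refine mem_iInter₂.2 fun i _ => ?_
      split <;> [assumption; simpa]
    have hsame : ∀ x' ∈ N, mk k x' = mk k x := by
      intro x' hx'
      refine hcongr k x x' fun i hi => ?_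
      have hx'i := mem_iInter₂.1 hx' i hi
      by_cases hxi : x ∈ T i k
      · rw [if_pos hxi] at hx'i; exact ⟨fun _ => hxi, fun _ => hx'i⟩
      · rw [if_neg hxi] at hx'i
        exact ⟨fun hc => absurd hc hx'i, fun hc => absurd hc hxi⟩
    refine (hgc (mk k x) k).continuousAt.congr ?_
    refine eventually_of_mem (hNopen.mem_nhds hxN) fun x' hx' => ?_
    rw [hh]
    simp only
    rw [hsame x' hx']
  · intro x
    rw [Metric.tendsto_atTop]
    intro ε hε
    obtain ⟨M, hM⟩ : ∃ M : ℕ, 14 * a M < ε := by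
      obtain ⟨M, hM⟩ := exists_pow_lt_of_lt_one (show (0:ℝ) < ε/14 by linarith)
        (show (2:ℝ)⁻¹ < 1 by norm_num)
      exact ⟨M, by rw [ha]; simp only; linarith⟩
    have hE1 : ∀ᶠ k in atTop, ∀ i ∈ Finset.range M, x ∈ T i k := by
      rw [eventually_all_finset]
      intro i _
      have hC : Tendsto (fun k => dist (g i k x) (g (i+1) k x)) atTop
          (𝓝 (dist (F i x) (F (i+1) x))) := (hgl i x).dist (hgl (i+1) x)
      have hlt : dist (F i x) (F (i+1) x) < 3 * a i :=
        lt_of_le_of_lt (hFF i x) (by nlinarith [hapos i])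
      exact (hC.eventually_lt_const hlt).mono fun k hk => hT1 i k (le_of_lt hk)
    have hE2 : ∀ᶠ k in atTop, dist (g M k x) (F M x) < a M := by
      obtain ⟨K, hK⟩ := Metric.tendsto_atTop.1 (hgl M x) (a M) (hapos M)
      exact eventually_atTop.2 ⟨K, hK⟩
    have hE3 : ∀ᶠ k in atTop, M ≤ k := eventually_ge_atTop M
    obtain ⟨K, hK⟩ := eventually_atTop.1 ((hE1.and hE2).and hE3)
    refine ⟨K, fun k hk => ?_⟩
    obtain ⟨⟨hc1, hc2⟩, hc3⟩ := hK k hk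
    have hPM : x ∈ ⋂ i ∈ Finset.range M, T i k := mem_iInter₂.2 fun i hi => hc1 i hi
    have hmM : M ≤ mk k x := Nat.le_findGreatest hc3 hPM
    have hPm : x ∈ ⋂ i ∈ Finset.range (mk k x), T i k := by
      have := Nat.findGreatest_spec
        (P := fun m => x ∈ ⋂ i ∈ Finset.range m, T i k) hc3 hPM
      simpa [hmk] using this
    have hchain : ∀ i, i < mk k x → dist (g i k x) (g (i+1) k x) ≤ 6 * a i := by
      intro i hi
      exact le_of_lt (hT2 i k (mem_iInter₂.1 hPm i (Finset.mem_range.2 hi)))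
    have htel : ∀ j : ℕ, M + j ≤ mk k x →
        dist (g (M+j) k x) (g M k x) ≤ ∑ i ∈ Finset.range j, 6 * a (M+i) := by
      intro j
      induction j with
      | zero => intro _; simp
      | succ j ih =>
        intro hle
        have hle' : M + j ≤ mk k x := by omega
        have h1 := ih hle'
        have h2 : dist (g (M+j) k x) (g (M+j+1) k x) ≤ 6 * a (M+j) :=
          hchain (M+j) (by omega)
        rw [Finset.sum_range_succ]
        calc dist (g (M+(j+1)) k x) (g M k x)
            ≤ dist (g (M+(j+1)) k x) (g (M+j) k x) + dist (g (M+j) k x) (g M k x) :=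
              dist_triangle _ _ _
          _ ≤ 6 * a (M+j) + ∑ i ∈ Finset.range j, 6 * a (M+i) := by
              rw [show M+(j+1) = M+j+1 from rfl, dist_comm]
              exact add_le_add h2 h1
          _ = _ := by ring
    have hsumle : ∀ j : ℕ, ∑ i ∈ Finset.range j, 6 * a (M+i) ≤ 12 * a M := by
      intro j
      have : ∑ i ∈ Finset.range j, 6 * a (M+i)
          = 6 * a M * ∑ i ∈ Finset.range j, (2:ℝ)⁻¹ ^ i := by
        rw [Finset.mul_sum]
        refine Finset.sum_congr rfl fun i _ => ?_
        rw [ha]; simp only [pow_add]; ring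
      rw [this]
      have h2 := geom_partial_le j
      nlinarith [hapos M]
    have hdist1 : dist (g (mk k x) k x) (g M k x) ≤ 12 * a M := by
      have hj : M + (mk k x - M) = mk k x := by omega
      have := htel (mk k x - M) (by omega)
      rw [hj] at this
      exact le_trans this (hsumle _)
    have hdist3 : dist (F M x) (f x) ≤ a M := hclose M x
    calc dist (h k x) (f x)
        ≤ dist (g (mk k x) k x) (g M k x) + dist (g M k x) (F M x) + dist (F M x) (f x) := by
          rw [hh]
          exact dist_triangle4 _ _ _ _
      _ < 12 * a M + a M + a M := by
          have := hc2
          linarith [hdist1, hdist3]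
      _ ≤ 14 * a M := by linarith
      _ < ε := hM


lemma approx_lemma {X Y : Type*} [TopologicalSpace X] [MetricSpace Y]
    (hX : StronglyZeroDimensional X) {f : X → Y} (hK : MemK1 f) (hS : MemSigmaF f)
    {ε : ℝ} (hε : 0 < ε) :
    ∃ F : X → Y, MemB1 F ∧ ∀ x, dist (F x) (f x) ≤ 2 * ε := by
  classical
  rcases isEmpty_or_nonempty X with hXe | hXne
  · refine ⟨f, ⟨fun _ => f, fun n => ?_, fun x => hXe.elim x⟩, fun x => hXe.elim x⟩
    refine continuous_def.2 fun s _ => ?_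
    have : f ⁻¹' s = ∅ := eq_empty_of_isEmpty _
    rw [this]; exact isOpen_empty
  obtain ⟨𝓑, hSFD, hbase⟩ := hS
  choose U hUdisc hUcoz hUsub using hSFD
  have y₀ : Y := f (Classical.arbitrary X)
  -- chosen centers
  have hyc' : ∀ n (A : ↥(𝓑 n)), ∃ y : Y,
      (∃ y' : Y, (A : Set X) ⊆ f ⁻¹' (ball y' ε)) → (A : Set X) ⊆ f ⁻¹' (ball y ε) := by
    intro n A
    by_cases h : ∃ y' : Y, (A : Set X) ⊆ f ⁻¹' (ball y' ε)
    · exact ⟨h.choose, fun _ => h.choose_spec⟩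
    · exact ⟨y₀, fun hc => absurd hc h⟩
  choose yc hycspec using hyc'
  -- inner zero-set decomposition
  have hZ'e : ∀ n (A : ↥(𝓑 n)), ∃ Z : ℕ → Set X, (∀ l, IsZeroSet (Z l)) ∧
      f ⁻¹' (ball (yc n A) (2*ε)) = ⋃ l, Z l := fun n A => hK _ isOpen_ball
  choose Z' hZ'zero hZ'eq using hZ'e
  -- outer zero-set decomposition
  have hZoe : ∀ n (A : ↥(𝓑 n)), ∃ Z : ℕ → Set X, (∀ m, IsZeroSet (Z m)) ∧
      f ⁻¹' {z | 2*ε < dist z (yc n A)} = ⋃ m, Z m := by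
    intro n A
    exact hK _ (isOpen_lt continuous_const (continuous_id.dist continuous_const))
  choose Zo hZozero hZoeq using hZoe
  -- cozero witnesses
  have hcoze : ∀ n (A : ↥(𝓑 n)), ∃ φ : X → ℝ, Continuous φ ∧ (U n A)ᶜ = φ ⁻¹' {0} :=
    fun n A => hUcoz n A
  choose φU hφUc hφUeq using hcoze
  -- T pieces of U
  have hTzero : ∀ n (A : ↥(𝓑 n)) (i : ℕ), IsZeroSet {x | 1/(i+1) ≤ |φU n A x|} :=
    fun n A i => isZeroSet_level (hφUc n A) _
  have hTsub : ∀ n (A : ↥(𝓑 n)) (i : ℕ), {x | 1/((i:ℝ)+1) ≤ |φU n A x|} ⊆ U n A := by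
    intro n A i x hx
    by_contra hc
    have hx0 : x ∈ (U n A)ᶜ := hc
    rw [hφUeq n A] at hx0
    simp only [mem_preimage, mem_singleton_iff] at hx0
    rw [mem_setOf_eq, hx0] at hx
    simp at hx
    have : (0:ℝ) < 1/(i+1) := by positivity
    linarith
  have hTcover : ∀ n (A : ↥(𝓑 n)) x, x ∈ U n A → ∃ i : ℕ, 1/((i:ℝ)+1) ≤ |φU n A x| := by
    intro n A x hx
    have hφne : φU n A x ≠ 0 := by
      intro h0
      have : x ∈ (U n A)ᶜ := by rw [hφUeq n A]; exact h0
      exact this hx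
    obtain ⟨i, hi⟩ := exists_nat_one_div_lt (abs_pos.2 hφne)
    exact ⟨i, le_of_lt hi⟩
  -- Z'' pieces
  have hZ''zero : ∀ n (A : ↥(𝓑 n)) (l i : ℕ),
      IsZeroSet (Z' n A l ∩ {x | 1/((i:ℝ)+1) ≤ |φU n A x|}) :=
    fun n A l i => isZeroSet_inter (hZ'zero n A l) (hTzero n A i)
  -- clopen W between Z'' and U
  have hWe : ∀ n (A : ↥(𝓑 n)) (l i : ℕ), ∃ W : Set X, IsClopen W ∧
      (Z' n A l ∩ {x | 1/((i:ℝ)+1) ≤ |φU n A x|}) ⊆ W ∧ W ∩ (U n A)ᶜ = ∅ := by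
    intro n A l i
    refine clopen_sep_zero hX (hZ''zero n A l i) ⟨φU n A, hφUc n A, hφUeq n A⟩ ?_
    rw [eq_empty_iff_forall_notMem]
    rintro x ⟨⟨_, hx2⟩, hx3⟩
    exact hx3 (hTsub n A i hx2)
  choose W hWclopen hWsub hWdisj using hWe
  have hWU : ∀ n (A : ↥(𝓑 n)) (l i : ℕ), W n A l i ⊆ U n A := by
    intro n A l i x hx
    by_contra hc
    have : x ∈ W n A l i ∩ (U n A)ᶜ := ⟨hx, hc⟩
    rw [hWdisj n A l i] at this
    exact this
  -- clopen E separating Z'' from outer pieces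
  have hEe : ∀ n (A : ↥(𝓑 n)) (l i m : ℕ), ∃ E : Set X, IsClopen E ∧
      (Z' n A l ∩ {x | 1/((i:ℝ)+1) ≤ |φU n A x|}) ⊆ E ∧ E ∩ Zo n A m = ∅ := by
    intro n A l i m
    refine clopen_sep_zero hX (hZ''zero n A l i) (hZozero n A m) ?_
    rw [eq_empty_iff_forall_notMem]
    rintro x ⟨⟨hx1, _⟩, hx2⟩
    have h1 : x ∈ f ⁻¹' (ball (yc n A) (2*ε)) := by
      rw [hZ'eq n A]; exact mem_iUnion.2 ⟨l, hx1⟩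
    have h2 : x ∈ f ⁻¹' {z | 2*ε < dist z (yc n A)} := by
      rw [hZoeq n A]; exact mem_iUnion.2 ⟨m, hx2⟩
    rw [mem_preimage, mem_ball] at h1
    rw [mem_preimage, mem_setOf_eq] at h2
    linarith
  choose E hEclopen hEsub hEdisj using hEe
  -- the D sets
  have hDe : ∀ n (A : ↥(𝓑 n)) (l i : ℕ), ∃ Df : ℕ → Set X,
      Df = fun k => W n A l i ∩ ⋂ m ∈ Finset.range (k+1), E n A l i m := fun n A l i => ⟨_, rfl⟩
  choose D hDdef using hDe
  have hDclopen : ∀ n (A : ↥(𝓑 n)) (l i k : ℕ), IsClopen (D n A l i k) := by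
    intro n A l i k
    rw [hDdef]
    exact (hWclopen n A l i).inter (isClopen_biInter_finset fun m _ => hEclopen n A l i m)
  have hDanti : ∀ n (A : ↥(𝓑 n)) (l i k k' : ℕ), k ≤ k' → D n A l i k' ⊆ D n A l i k := by
    intro n A l i k k' hkk x hx
    rw [hDdef] at hx ⊢
    refine ⟨hx.1, ?_⟩
    have := hx.2
    rw [mem_iInter₂] at this ⊢
    intro m hm
    exact this m (Finset.mem_range.2 (lt_of_lt_of_le (Finset.mem_range.1 hm) (by omega)))
  have hDsub : ∀ n (A : ↥(𝓑 n)) (l i k : ℕ), D n A l i k ⊆ U n A := by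
    intro n A l i k
    rw [hDdef]
    exact Subset.trans inter_subset_left (hWU n A l i)
  have hZ''D : ∀ n (A : ↥(𝓑 n)) (l i k : ℕ),
      (Z' n A l ∩ {x | 1/((i:ℝ)+1) ≤ |φU n A x|}) ⊆ D n A l i k := by
    intro n A l i k
    rw [hDdef]
    exact subset_inter (hWsub n A l i) (subset_iInter₂ fun m _ => hEsub n A l i m)
  have hDlim : ∀ n (A : ↥(𝓑 n)) (l i : ℕ) (x : X), (∀ k, x ∈ D n A l i k) →
      dist (f x) (yc n A) ≤ 2*ε := by
    intro n A l i x hx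
    by_contra hc
    push_neg at hc
    have h2 : x ∈ f ⁻¹' {z | 2*ε < dist z (yc n A)} := hc
    rw [hZoeq n A] at h2
    obtain ⟨m₀, hm₀⟩ := mem_iUnion.1 h2
    have hxD := hx m₀
    rw [hDdef] at hxD
    have hxE : x ∈ E n A l i m₀ := by
      have := hxD.2
      rw [mem_iInter₂] at this
      exact this m₀ (Finset.mem_range.2 (by omega))
    have : x ∈ E n A l i m₀ ∩ Zo n A m₀ := ⟨hxE, hm₀⟩
    rw [hEdisj n A l i m₀] at this
    exact this
  -- uniqueness within a family
  have huniq : ∀ n (A B : ↥(𝓑 n)) x, x ∈ U n A → x ∈ U n B → A = B := by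
    intro n A B x hA hB
    obtain ⟨V, hV, hsub⟩ := hUdisc n x
    exact hsub ⟨x, hA, mem_of_mem_nhds hV⟩ ⟨x, hB, mem_of_mem_nhds hV⟩
  -- enumerate triple indices
  set e : ℕ ≃ ℕ × ℕ × ℕ := (Denumerable.eqv (ℕ × ℕ × ℕ)).symm with he
  set act : ℕ → ℕ → X → Prop := fun p k x =>
    ∃ A : ↥(𝓑 (e p).1), x ∈ D (e p).1 A (e p).2.1 (e p).2.2 k with hact
  set val : ℕ → ℕ → X → Y := fun p k x =>
    if h : act p k x then yc (e p).1 h.choose else y₀ with hval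
  set hk : ℕ → X → Y := fun k x =>
    if h : ∃ p, p ≤ k ∧ act p k x then val (Nat.find h) k x else y₀ with hhk
  have hvalwit : ∀ p k x (A : ↥(𝓑 (e p).1)),
      x ∈ D (e p).1 A (e p).2.1 (e p).2.2 k → val p k x = yc (e p).1 A := by
    intro p k x A hA
    have hac : act p k x := ⟨A, hA⟩
    have hwit := hac.choose_spec
    have hEq : hac.choose = A :=
      huniq _ _ _ x (hDsub _ _ _ _ _ hwit) (hDsub _ _ _ _ _ hA)
    rw [hval]
    simp only [dif_pos hac]
    rw [hEq]
  -- local constancy data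
  have hloc : ∀ p k (x : X), ∃ N ∈ 𝓝 x, ∀ x' ∈ N,
      (act p k x' ↔ act p k x) ∧ val p k x' = val p k x := by
    intro p k x
    obtain ⟨V, hV, hsub⟩ := hUdisc (e p).1 x
    by_cases hA : ∃ A : ↥(𝓑 (e p).1), (U (e p).1 A ∩ V).Nonempty
    · obtain ⟨A₀, hA₀⟩ := hA
      by_cases hxD : x ∈ D (e p).1 A₀ (e p).2.1 (e p).2.2 k
      · refine ⟨V ∩ D (e p).1 A₀ (e p).2.1 (e p).2.2 k,
          inter_mem hV ((hDclopen _ _ _ _ _).2.mem_nhds hxD), ?_⟩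
        rintro x' ⟨_, hx'D⟩
        have h1 : act p k x' := ⟨A₀, hx'D⟩
        have h2 : act p k x := ⟨A₀, hxD⟩
        exact ⟨⟨fun _ => h2, fun _ => h1⟩, by
          rw [hvalwit p k x' A₀ hx'D, hvalwit p k x A₀ hxD]⟩
      · have hnot : ∀ x'' , x'' ∈ V → x'' ∉ D (e p).1 A₀ (e p).2.1 (e p).2.2 k →
            ¬ act p k x'' := by
          rintro x'' hV'' hD'' ⟨B, hB⟩
          have hBA : B = A₀ := hsub ⟨x'', hDsub _ _ _ _ _ hB, hV''⟩ hA₀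
          rw [hBA] at hB
          exact hD'' hB
        refine ⟨V ∩ (D (e p).1 A₀ (e p).2.1 (e p).2.2 k)ᶜ,
          inter_mem hV (((hDclopen _ _ _ _ _).compl).2.mem_nhds hxD), ?_⟩
        rintro x' ⟨hx'V, hx'D⟩
        have hnx' := hnot x' hx'V hx'D
        have hnx := hnot x (mem_of_mem_nhds hV) hxD
        refine ⟨⟨fun h => absurd h hnx', fun h => absurd h hnx⟩, ?_⟩
        rw [hval]
        simp only [dif_neg hnx', dif_neg hnx]
    · have hnone : ∀ x'', x'' ∈ V → ¬ act p k x'' := by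
        rintro x'' hx'' ⟨B, hB⟩
        exact hA ⟨B, ⟨x'', hDsub _ _ _ _ _ hB, hx''⟩⟩
      refine ⟨V, hV, fun x' hx' => ?_⟩
      have hnx' := hnone x' hx'
      have hnx := hnone x (mem_of_mem_nhds hV)
      refine ⟨⟨fun h => absurd h hnx', fun h => absurd h hnx⟩, ?_⟩
      rw [hval]
      simp only [dif_neg hnx', dif_neg hnx]
  choose Nb hNb hNbspec using hloc
  -- continuity
  have hkcont : ∀ k, Continuous (hk k) := by
    intro k
    rw [continuous_iff_continuousAt]
    intro x
    have hNN : (⋂ p ∈ Finset.range (k+1), Nb p k x) ∈ 𝓝 x :=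
      (Filter.biInter_finset_mem _).2 fun p _ => hNb p k x
    refine Filter.EventuallyEq.continuousAt (y := hk k x) ?_
    refine eventually_of_mem hNN fun x' hx' => ?_
    have hmem : ∀ p, p ≤ k → x' ∈ Nb p k x := by
      intro p hp
      exact mem_iInter₂.1 hx' p (Finset.mem_range.2 (by omega))
    have hiff : ∀ p, p ≤ k → (act p k x' ↔ act p k x) :=
      fun p hp => (hNbspec p k x x' (hmem p hp)).1
    have hveq : ∀ p, p ≤ k → val p k x' = val p k x :=
      fun p hp => (hNbspec p k x x' (hmem p hp)).2
    by_cases hex : ∃ p, p ≤ k ∧ act p k x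
    · have hex' : ∃ p, p ≤ k ∧ act p k x' := by
        obtain ⟨p, hp1, hp2⟩ := hex
        exact ⟨p, hp1, (hiff p hp1).2 hp2⟩
      have hfind : Nat.find hex' = Nat.find hex := by
        apply le_antisymm
        · obtain ⟨hp1, hp2⟩ := Nat.find_spec hex
          exact Nat.find_min' hex' ⟨hp1, (hiff _ hp1).2 hp2⟩
        · obtain ⟨hp1, hp2⟩ := Nat.find_spec hex'
          exact Nat.find_min' hex ⟨hp1, (hiff _ hp1).1 hp2⟩
      rw [hhk]
      simp only [dif_pos hex, dif_pos hex']
      rw [hfind]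
      exact hveq _ (Nat.find_spec hex).1
    · have hex' : ¬ ∃ p, p ≤ k ∧ act p k x' := by
        rintro ⟨p, hp1, hp2⟩
        exact hex ⟨p, hp1, (hiff p hp1).1 hp2⟩
      rw [hhk]
      simp only [dif_neg hex, dif_neg hex']
  -- pointwise limits
  have hlim : ∀ x : X, ∃ v : Y, Tendsto (fun k => hk k x) atTop (𝓝 v) ∧
      dist v (f x) ≤ 2*ε := by
    intro x
    -- coverage: a good index exists
    have hgood : ∃ p, ∃ A : ↥(𝓑 (e p).1), ∀ k, x ∈ D (e p).1 A (e p).2.1 (e p).2.2 k := by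
      obtain ⟨𝓢, h𝓢sub, h𝓢eq⟩ := hbase (ball (f x) ε) isOpen_ball
      have hx𝓢 : x ∈ ⋃₀ 𝓢 := by
        rw [← h𝓢eq]
        exact mem_ball_self hε
      obtain ⟨B₀, hB₀𝓢, hxB₀⟩ := hx𝓢
      obtain ⟨n₀, hn₀⟩ := mem_iUnion.1 (h𝓢sub hB₀𝓢)
      set A₀ : ↥(𝓑 n₀) := ⟨B₀, hn₀⟩ with hA₀
      have hPA : ∃ y' : Y, (A₀ : Set X) ⊆ f ⁻¹' (ball y' ε) := by
        refine ⟨f x, fun z hz => ?_⟩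
        have hz2 : z ∈ ⋃₀ 𝓢 := subset_sUnion_of_mem hB₀𝓢 hz
        rwa [← h𝓢eq] at hz2
      have hyA := hycspec n₀ A₀ hPA
      have hxU : x ∈ U n₀ A₀ := hUsub n₀ A₀ (subset_closure hxB₀)
      obtain ⟨i, hi⟩ := hTcover n₀ A₀ x hxU
      have hxball : x ∈ f ⁻¹' (ball (yc n₀ A₀) (2*ε)) := by
        have := hyA hxB₀
        rw [mem_preimage, mem_ball] at this ⊢
        linarith
      rw [hZ'eq n₀ A₀] at hxball
      obtain ⟨l, hl⟩ := mem_iUnion.1 hxball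
      refine ⟨e.symm (n₀, l, i), ?_⟩
      rw [Equiv.apply_symm_apply]
      exact ⟨A₀, fun k => hZ''D n₀ A₀ l i k ⟨hl, hi⟩⟩
    -- dead indices
    have hdead : ∀ p, (¬ ∃ A : ↥(𝓑 (e p).1), ∀ k, x ∈ D (e p).1 A (e p).2.1 (e p).2.2 k) →
        ∃ K, ∀ k ≥ K, ¬ act p k x := by
      intro p hng
      by_cases hA : ∃ A : ↥(𝓑 (e p).1), ∃ k, x ∈ D (e p).1 A (e p).2.1 (e p).2.2 k
      · obtain ⟨A₁, k₁, hk₁⟩ := hA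
        have hnall : ¬ ∀ k, x ∈ D (e p).1 A₁ (e p).2.1 (e p).2.2 k :=
          fun hall => hng ⟨A₁, hall⟩
        push_neg at hnall
        obtain ⟨k₂, hk₂⟩ := hnall
        refine ⟨k₂, fun k hkk => ?_⟩
        rintro ⟨B, hB⟩
        have hBA : B = A₁ := huniq _ _ _ x (hDsub _ _ _ _ _ hB) (hDsub _ _ _ _ _ hk₁)
        rw [hBA] at hB
        exact hk₂ (hDanti _ _ _ _ _ _ hkk hB)
      · refine ⟨0, fun k _ => ?_⟩
        rintro ⟨B, hB⟩
        exact hA ⟨B, k, hB⟩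
    set phat := Nat.find hgood with hphat
    obtain ⟨Ahat, hAhat⟩ := Nat.find_spec hgood
    set v : Y := yc (e phat).1 Ahat with hv
    have hdd : ∀ p, p < phat → ∃ K, ∀ k ≥ K, ¬ act p k x :=
      fun p hp => hdead p (Nat.find_min hgood hp)
    choose Kd hKd using hdd
    set KK : ℕ := max phat ((Finset.range phat).sup
      (fun p => if h : p < phat then Kd p h else 0)) with hKK
    have hev : ∀ k ≥ KK, hk k x = v := by
      intro k hkK
      have hkphat : phat ≤ k := le_trans (le_max_left _ _) hkK
      have hnact : ∀ p, p < phat → ¬ act p k x := by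
        intro p hp
        refine hKd p hp k ?_
        have h1 : Kd p hp ≤ (Finset.range phat).sup (fun p => if h : p < phat then Kd p h else 0) := by
          have := Finset.le_sup (f := fun p => if h : p < phat then Kd p h else 0)
            (Finset.mem_range.2 hp)
          simpa only [dif_pos hp] using this
        exact le_trans (le_trans h1 (le_max_right _ _)) hkK
      have hex : ∃ p, p ≤ k ∧ act p k x := ⟨phat, hkphat, ⟨Ahat, hAhat k⟩⟩
      have hfind : Nat.find hex = phat := by
        apply le_antisymm
        · exact Nat.find_min' hex ⟨hkphat, ⟨Ahat, hAhat k⟩⟩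
        · by_contra hc
          push_neg at hc
          exact hnact _ hc (Nat.find_spec hex).2
      rw [hhk]
      simp only [dif_pos hex]
      rw [hfind]
      exact hvalwit phat k x Ahat (hAhat k)
    refine ⟨v, tendsto_atTop_of_eventually_const hev, ?_⟩
    rw [dist_comm]
    exact hDlim _ _ _ _ x (fun k => hAhat k)
  choose Fv hFt hFd using hlim
  exact ⟨Fv, ⟨hk, hkcont, hFt⟩, hFd⟩


theorem stmt11 {X Y : Type*} [TopologicalSpace X] [TopologicalSpace Y]
    [TopologicalSpace.MetrizableSpace Y] (hX : StronglyZeroDimensional X) :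
    ∀ f : X → Y, (MemK1 f ∧ MemSigmaF f) ↔ MemB1 f := by
  letI : MetricSpace Y := TopologicalSpace.metrizableSpaceMetric Y
  intro f
  constructor
  · rintro ⟨hK, hS⟩
    have happ : ∀ m : ℕ, ∃ F : X → Y, MemB1 F ∧ ∀ x, dist (F x) (f x) ≤ (2:ℝ)⁻¹ ^ m := by
      intro m
      obtain ⟨F, h1, h2⟩ := approx_lemma hX hK hS (ε := (2:ℝ)⁻¹ ^ m / 2) (by positivity)
      exact ⟨F, h1, fun x => by have := h2 x; linarith⟩
    choose F hF1 hF2 using happ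
    exact memB1_of_unif hX F hF1 hF2
  · intro hB
    exact ⟨memK1_of_memB1 hB, memSigmaF_of_memB1 hB⟩
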